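/- For every modulus κ with 0 < κ < 1, the function rn : ℝ → ℝ is periodic with period 4K, i.e. rn(u + 4K) = rn(u) for all real u; moreover 4K is the least positive period of rn. -/

import Mathlib

open Real

/-- The Gauss hypergeometric series `F(a, b; c; x)` with real parameters. -/
noncomputable def hyperF (a b c x : ℝ) : ℝ :=
  ∑' n : ℕ, (Polynomial.eval a (ascPochhammer ℝ n) * Polynomial.eval b (ascPochhammer ℝ n) /
      (Polynomial.eval c (ascPochhammer ℝ n) * (Nat.factorial n : ℝ))) * x ^ n

/-- `G κ T = ∫₀^T F(1/4, 3/4; 1/2; κ² sin² t) dt`. -/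
noncomputable def G (κ T : ℝ) : ℝ :=
  ∫ t in (0:ℝ)..T, hyperF (1/4) (3/4) (1/2) (κ ^ 2 * Real.sin t ^ 2)

/-- The complete integral `K = G κ (π/2)`. -/
noncomputable def K (κ : ℝ) : ℝ := G κ (Real.pi / 2)

/-- The auxiliary function `ψ = arcsin (κ sin φ)`. -/
noncomputable def psi (κ : ℝ) (φ : ℝ → ℝ) (u : ℝ) : ℝ :=
  Real.arcsin (κ * Real.sin (φ u))

/-- The root function `rn = sin (ψ/2)`. -/
noncomputable def rn (κ : ℝ) (φ : ℝ → ℝ) (u : ℝ) : ℝ :=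
  Real.sin (psi κ φ u / 2)




noncomputable def cc (n : ℕ) : ℝ :=
  Polynomial.eval (1/4 : ℝ) (ascPochhammer ℝ n) * Polynomial.eval (3/4 : ℝ) (ascPochhammer ℝ n) /
      (Polynomial.eval (1/2 : ℝ) (ascPochhammer ℝ n) * (Nat.factorial n : ℝ))

lemma asc_pos {q : ℝ} (hq : 0 < q) (n : ℕ) : 0 < Polynomial.eval q (ascPochhammer ℝ n) := by
  induction n with
  | zero => simp
  | succ n ih =>
    rw [ascPochhammer_succ_eval]
    positivity

lemma cc_zero : cc 0 = 1 := by simp [cc]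

lemma cc_pos (n : ℕ) : 0 < cc n := by
  have h1 := asc_pos (q := (1/4:ℝ)) (by norm_num) n
  have h2 := asc_pos (q := (3/4:ℝ)) (by norm_num) n
  have h3 := asc_pos (q := (1/2:ℝ)) (by norm_num) n
  have h4 : (0:ℝ) < Nat.factorial n := by exact_mod_cast Nat.factorial_pos n
  exact div_pos (mul_pos h1 h2) (mul_pos h3 h4)

lemma cc_succ (n : ℕ) :
    cc (n+1) = cc n * ((1/4 + n) * (3/4 + n) / ((1/2 + n) * (n + 1))) := by
  have h3 := (asc_pos (q := (1/2:ℝ)) (by norm_num) n).ne'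
  have h4 : ((Nat.factorial n : ℝ)) ≠ 0 := by exact_mod_cast (Nat.factorial_pos n).ne'
  have h5 : ((1:ℝ)/2 + n) ≠ 0 := by positivity
  have h6 : ((n:ℝ) + 1) ≠ 0 := by positivity
  simp only [cc, ascPochhammer_succ_eval, Nat.factorial_succ, Nat.cast_mul, Nat.cast_add,
    Nat.cast_one]
  field_simp

lemma cc_le_one (n : ℕ) : cc n ≤ 1 := by
  induction n with
  | zero => simp [cc_zero]
  | succ n ih =>
    rw [cc_succ]
    have hr : ((1:ℝ)/4 + n) * (3/4 + n) / ((1/2 + n) * (n + 1)) ≤ 1 := by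
      rw [div_le_one (by positivity)]
      nlinarith [Nat.cast_nonneg (α := ℝ) n]
    calc cc n * ((1/4 + n) * (3/4 + n) / ((1/2 + n) * (n + 1)))
        ≤ cc n * 1 := by
          exact mul_le_mul_of_nonneg_left hr (cc_pos n).le
      _ ≤ 1 := by simpa using ih

lemma hyperF_eq (x : ℝ) : hyperF (1/4) (3/4) (1/2) x = ∑' n : ℕ, cc n * x ^ n := rfl

noncomputable def ff (κ t : ℝ) : ℝ := hyperF (1/4) (3/4) (1/2) (κ ^ 2 * Real.sin t ^ 2)

lemma ff_cont {κ : ℝ} (hκ₀ : 0 < κ) (hκ₁ : κ < 1) : Continuous (ff κ) := by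
  have : Continuous fun t : ℝ => ∑' n : ℕ, cc n * (κ ^ 2 * Real.sin t ^ 2) ^ n := by
    apply continuous_tsum (u := fun n => (κ^2) ^ n)
    · intro n; fun_prop
    · exact summable_geometric_of_lt_one (by positivity) (by nlinarith)
    · intro n t
      have hb1 : κ ^ 2 * Real.sin t ^ 2 ≤ κ ^ 2 := by
        nlinarith [Real.sin_sq_le_one t, sq_nonneg κ]
      have hb0 : 0 ≤ κ ^ 2 * Real.sin t ^ 2 := by positivity
      rw [Real.norm_eq_abs, abs_of_nonneg (mul_nonneg (cc_pos n).le (by positivity))]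
      calc cc n * (κ ^ 2 * Real.sin t ^ 2) ^ n ≤ 1 * (κ^2) ^ n := by
            exact mul_le_mul (cc_le_one n) (pow_le_pow_left₀ hb0 hb1 n) (by positivity)
              zero_le_one
        _ = (κ^2) ^ n := one_mul _
  exact this

lemma ff_summable {κ : ℝ} (hκ₀ : 0 < κ) (hκ₁ : κ < 1) (t : ℝ) :
    Summable fun n : ℕ => cc n * (κ ^ 2 * Real.sin t ^ 2) ^ n := by
  apply Summable.of_nonneg_of_le (fun n => mul_nonneg (cc_pos n).le (by positivity))
    (fun n => ?_) (summable_geometric_of_lt_one (r := κ^2) (by positivity) (by nlinarith))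
  have hb1 : κ ^ 2 * Real.sin t ^ 2 ≤ κ ^ 2 := by
    nlinarith [Real.sin_sq_le_one t, sq_nonneg κ]
  have hb0 : 0 ≤ κ ^ 2 * Real.sin t ^ 2 := by positivity
  calc cc n * (κ ^ 2 * Real.sin t ^ 2) ^ n ≤ 1 * (κ^2) ^ n :=
        mul_le_mul (cc_le_one n) (pow_le_pow_left₀ hb0 hb1 n) (by positivity) zero_le_one
    _ = (κ^2) ^ n := one_mul _

lemma ff_ge_one {κ : ℝ} (hκ₀ : 0 < κ) (hκ₁ : κ < 1) (t : ℝ) : 1 ≤ ff κ t := by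
  have h := Summable.le_tsum (ff_summable hκ₀ hκ₁ t) 0
    (fun i _ => mul_nonneg (cc_pos i).le (by positivity))
  rw [ff, hyperF_eq]
  simpa [cc_zero] using h

section main
variable {κ : ℝ} (hκ₀ : 0 < κ) (hκ₁ : κ < 1)

lemma G_eq (T : ℝ) : G κ T = ∫ t in (0:ℝ)..T, ff κ t := rfl

lemma ff_per : Function.Periodic (ff κ) π := by
  intro t; simp [ff, Real.sin_add_pi, neg_sq]

include hκ₀ hκ₁

lemma ff_int (a b : ℝ) : IntervalIntegrable (ff κ) MeasureTheory.volume a b :=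
  (ff_cont hκ₀ hκ₁).intervalIntegrable a b

lemma G_split (a b : ℝ) : G κ b = G κ a + ∫ t in a..b, ff κ t := by
  rw [G_eq, G_eq, intervalIntegral.integral_add_adjacent_intervals (ff_int hκ₀ hκ₁ 0 a)
    (ff_int hκ₀ hκ₁ a b)]

lemma G_strictMono : StrictMono (G κ) := by
  intro a b hab
  have hpos : 0 < ∫ t in a..b, ff κ t :=
    intervalIntegral.intervalIntegral_pos_of_pos_on (ff_int hκ₀ hκ₁ a b)
      (fun x _ => lt_of_lt_of_le one_pos (ff_ge_one hκ₀ hκ₁ x)) hab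
  rw [G_split hκ₀ hκ₁ a b]
  linarith

lemma G_zero : G κ 0 = 0 := by rw [G_eq]; simp

lemma K_pos : 0 < K κ := by
  have := G_strictMono hκ₀ hκ₁ (show (0:ℝ) < π/2 by positivity)
  rwa [G_zero hκ₀ hκ₁] at this

lemma G_add_pi (T : ℝ) : G κ (T + π) = G κ T + 2 * K κ := by
  have h1 : G κ (T + π) = G κ T + ∫ t in T..T+π, ff κ t := G_split hκ₀ hκ₁ T (T+π)
  have h2 : (∫ t in T..T+π, ff κ t) = ∫ t in (0:ℝ)..0+π, ff κ t :=
    (ff_per (κ := κ)).intervalIntegral_add_eq T 0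
  have h3 : (∫ t in (0:ℝ)..π, ff κ t) = 2 * K κ := by
    have hsplit : (∫ t in (0:ℝ)..π, ff κ t)
        = (∫ t in (0:ℝ)..π/2, ff κ t) + ∫ t in (π/2)..π, ff κ t :=
      (intervalIntegral.integral_add_adjacent_intervals (ff_int hκ₀ hκ₁ 0 (π/2))
        (ff_int hκ₀ hκ₁ (π/2) π)).symm
    have hsym : (∫ t in (π/2)..π, ff κ t) = ∫ t in (0:ℝ)..π/2, ff κ t := by
      have := intervalIntegral.integral_comp_sub_left (a := (0:ℝ)) (b := π/2) (ff κ) π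
      have heq : ∀ t : ℝ, ff κ (π - t) = ff κ t := by
        intro t; simp [ff, Real.sin_pi_sub]
      simp only [heq] at this
      have h70 : π - π/2 = π/2 := by ring
      have h71 : π - (0:ℝ) = π := sub_zero π
      rw [h70, h71] at this
      exact this.symm
    rw [hsplit, hsym, K, G_eq]; ring
  rw [h1, h2, zero_add, h3]

lemma G_nat_pi (n : ℕ) : G κ (n * π) = 2 * n * K κ := by
  induction n with
  | zero => simpa using G_zero hκ₀ hκ₁
  | succ n ih =>
    push_cast
    rw [add_mul, one_mul, G_add_pi hκ₀ hκ₁, ih]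
    ring

variable (φ : ℝ → ℝ) (hφ₁ : Function.LeftInverse φ (G κ))
  (hφ₂ : Function.RightInverse φ (G κ))

include hφ₁ hφ₂

lemma phi_add (u : ℝ) : φ (u + 2 * K κ) = φ u + π := by
  conv_lhs => rw [← hφ₂ u]
  rw [← G_add_pi hκ₀ hκ₁, hφ₁]

lemma rn_anti (u : ℝ) : rn κ φ (u + 2 * K κ) = - rn κ φ u := by
  rw [rn, rn, psi, psi, phi_add hκ₀ hκ₁ φ hφ₁ hφ₂, Real.sin_add_pi, mul_neg,
    Real.arcsin_neg, neg_div, Real.sin_neg]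

lemma phi_zero : φ 0 = 0 := by
  conv_lhs => rw [← G_zero hκ₀ hκ₁]
  exact hφ₁ 0

lemma phi_strictMono : StrictMono φ := by
  intro a b hab
  by_contra h
  push_neg at h
  have := (G_strictMono hκ₀ hκ₁).monotone h
  rw [hφ₂, hφ₂] at this
  exact absurd this (not_le.mpr hab)

lemma rn_zero_iff (u : ℝ) : rn κ φ u = 0 ↔ ∃ n : ℤ, (n : ℝ) * π = φ u := by
  rw [rn, psi]
  have habs : |κ * Real.sin (φ u)| ≤ 1 := by
    rw [abs_mul, abs_of_pos hκ₀]
    calc κ * |Real.sin (φ u)| ≤ 1 * 1 :=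
      mul_le_mul hκ₁.le (Real.abs_sin_le_one _) (abs_nonneg _) zero_le_one
    _ = 1 := one_mul 1
  have harc := Real.arcsin_mem_Icc (κ * Real.sin (φ u))
  have hπ : (0:ℝ) < π := Real.pi_pos
  constructor
  · intro h
    have h0 : Real.arcsin (κ * Real.sin (φ u)) / 2 = 0 := by
      refine (Real.sin_eq_zero_iff_of_lt_of_lt ?_ ?_).mp h
      · nlinarith [harc.1]
      · nlinarith [harc.2]
    have h1 : Real.arcsin (κ * Real.sin (φ u)) = 0 := by linarith
    have h2 : κ * Real.sin (φ u) = 0 := Real.arcsin_eq_zero_iff.mp h1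
    have h3 : Real.sin (φ u) = 0 := by
      rcases mul_eq_zero.mp h2 with h | h
      · exact absurd h hκ₀.ne'
      · exact h
    exact Real.sin_eq_zero_iff.mp h3
  · rintro ⟨n, hn⟩
    have : Real.sin (φ u) = 0 := Real.sin_eq_zero_iff.mpr ⟨n, hn⟩
    simp [this]

theorem stmt7' :
    (∀ u : ℝ, rn κ φ (u + 4 * K κ) = rn κ φ u) ∧
      IsLeast {p : ℝ | 0 < p ∧ ∀ u : ℝ, rn κ φ (u + p) = rn κ φ u} (4 * K κ) := by
  have hper : ∀ u : ℝ, rn κ φ (u + 4 * K κ) = rn κ φ u := by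
    intro u
    have : u + 4 * K κ = (u + 2 * K κ) + 2 * K κ := by ring
    rw [this, rn_anti hκ₀ hκ₁ φ hφ₁ hφ₂, rn_anti hκ₀ hκ₁ φ hφ₁ hφ₂, neg_neg]
  refine ⟨hper, ⟨mul_pos (by norm_num) (K_pos hκ₀ hκ₁), hper⟩, ?_⟩
  rintro p ⟨hp, hpper⟩
  -- rn p = rn 0 = 0
  have hrn0 : rn κ φ 0 = 0 := by
    rw [rn, psi, phi_zero hκ₀ hκ₁ φ hφ₁ hφ₂]
    simp
  have hrnp : rn κ φ p = 0 := by
    have := hpper 0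
    rwa [zero_add, hrn0] at this
  obtain ⟨n, hn⟩ := (rn_zero_iff hκ₀ hκ₁ φ hφ₁ hφ₂ p).mp hrnp
  have hφp : 0 < φ p := by
    have := phi_strictMono hκ₀ hκ₁ φ hφ₁ hφ₂ hp
    rwa [phi_zero hκ₀ hκ₁ φ hφ₁ hφ₂] at this
  have hn1 : 1 ≤ n := by
    by_contra h
    push_neg at h
    have h' : n ≤ 0 := by omega
    have : (n:ℝ) ≤ 0 := by exact_mod_cast h'
    nlinarith [Real.pi_pos]
  have hcast : ((n:ℝ)) = (n.toNat : ℝ) := by exact_mod_cast (Int.toNat_of_nonneg (by omega)).symm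
  -- p = 2 n K
  have hpval : p = 2 * (n:ℝ) * K κ := by
    have : G κ (φ p) = G κ ((n.toNat : ℝ) * π) := by rw [← hn, hcast]
    rw [hφ₂ p, G_nat_pi hκ₀ hκ₁] at this
    rw [this, ← hcast]
  rcases lt_or_ge n 2 with h2 | h2
  · -- n = 1, so p = 2K; contradiction with rn K ≠ 0
    have hn1' : n = 1 := le_antisymm (by omega) hn1
    subst hn1'
    exfalso
    have hKper : rn κ φ (K κ + p) = rn κ φ (K κ) := hpper (K κ)
    rw [hpval] at hKper
    norm_num at hKper
    rw [rn_anti hκ₀ hκ₁ φ hφ₁ hφ₂] at hKper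
    have hK0 : rn κ φ (K κ) = 0 := by linarith
    obtain ⟨m, hm⟩ := (rn_zero_iff hκ₀ hκ₁ φ hφ₁ hφ₂ (K κ)).mp hK0
    have : G κ (φ (K κ)) = G κ ((m.toNat : ℝ) * π) ∨ True := Or.inr trivial
    -- K = G(φ K) = G(mπ) = 2mK
    have hφK : 0 < φ (K κ) := by
      have := phi_strictMono hκ₀ hκ₁ φ hφ₁ hφ₂ (K_pos hκ₀ hκ₁)
      rwa [phi_zero hκ₀ hκ₁ φ hφ₁ hφ₂] at this
    have hm1 : 1 ≤ m := by
      by_contra h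
      push_neg at h
      have h' : m ≤ 0 := by omega
      have : (m:ℝ) ≤ 0 := by exact_mod_cast h'
      nlinarith [Real.pi_pos]
    have hcast' : ((m:ℝ)) = (m.toNat : ℝ) := by
      exact_mod_cast (Int.toNat_of_nonneg (by omega)).symm
    have hKval : K κ = 2 * (m:ℝ) * K κ := by
      have h' : G κ (φ (K κ)) = G κ ((m.toNat : ℝ) * π) := by rw [← hm, hcast']
      rw [hφ₂ (K κ), G_nat_pi hκ₀ hκ₁] at h'
      rw [hcast']
      exact h'
    have hKpos := K_pos hκ₀ hκ₁
    have : (m:ℝ) ≥ 1 := by exact_mod_cast hm1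
    nlinarith
  · have : (n:ℝ) ≥ 2 := by exact_mod_cast h2
    have hKpos := K_pos hκ₀ hκ₁
    rw [hpval]
    nlinarith

end main


theorem stmt7 (κ : ℝ) (hκ₀ : 0 < κ) (hκ₁ : κ < 1)
    (φ : ℝ → ℝ) (hφ₁ : Function.LeftInverse φ (G κ))
    (hφ₂ : Function.RightInverse φ (G κ)) :
    (∀ u : ℝ, rn κ φ (u + 4 * K κ) = rn κ φ u) ∧
      IsLeast {p : ℝ | 0 < p ∧ ∀ u : ℝ, rn κ φ (u + p) = rn κ φ u} (4 * K κ) :=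
  stmt7' hκ₀ hκ₁ φ hφ₁ hφ₂
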